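/- Consider the linear Gaussian model X_{t+1} = ∑_{s=1}^{min(τ,t+1)} A_{t+1,s} X_{t+1-s} + B_{t+1} for 0 ≤ t ≤ T-1 with X_0 ~ N(μ_0, Σ_0), and observations Z_{t+1} = C X_t + W_{t+1} for 0 ≤ t ≤ T, where B_t ~ N(0,Q), W_t ~ N(0,R) are white Gaussian noise processes, and X_0, B, W are mutually independent. Fix f ∈ ℝ^d and a deterministic control u = (u_0,...,u_{T-1}) in ℝ^m, and let y be the backward process y_t = ∑_{s=1}^{min(τ,T-t)} A_{t+s,s}ᵀ y_{t+s} + Cᵀ u_t with y_T = f. Define the estimator S_T = μ_0ᵀ y_0 - ∑_{t=1}^T u_{t-1}ᵀ Z_t. Then E[|fᵀ X_T - S_T|²] = |y_0|²_{Σ_0} + ∑_{t=1}^{T} |y_t|²_Q + ∑_{t=0}^{T-1} |u_t|²_R, i.e., twice the control cost J_T(u; f). -/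

import Mathlib

open Finset Matrix MeasureTheory ProbabilityTheory

open Real
open scoped NNReal ENNReal

section AuxLemmas

lemma aux_integrable_sq_mul_exp {b : ℝ} (hb : 0 < b) :
    Integrable (fun x : ℝ => x ^ 2 * Real.exp (-b * x ^ 2)) := by
  have h := integrable_rpow_mul_exp_neg_mul_sq hb (s := 2) (by norm_num)
  have : (fun x : ℝ => x ^ (2 : ℝ) * Real.exp (-b * x ^ 2))
      = fun x : ℝ => x ^ 2 * Real.exp (-b * x ^ 2) := by
    funext x
    rw [show ((2 : ℝ) = ((2 : ℕ) : ℝ)) by norm_num, Real.rpow_natCast]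
  rwa [this] at h

lemma aux_integral_sq_mul_exp {b : ℝ} (hb : 0 < b) :
    ∫ x : ℝ, x ^ 2 * Real.exp (-b * x ^ 2) = (2 * b)⁻¹ * Real.sqrt (π / b) := by
  have hderiv : ∀ x : ℝ, HasDerivAt (fun x : ℝ => x * Real.exp (-b * x ^ 2))
      (Real.exp (-b * x ^ 2) - 2 * b * (x ^ 2 * Real.exp (-b * x ^ 2))) x := by
    intro x
    have h1 : HasDerivAt (fun x : ℝ => -b * x ^ 2) (-b * (2 * x)) x := by
      simpa using ((hasDerivAt_pow 2 x).const_mul (-b))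
    have h2 := ((h1.exp).const_mul x).add_const 0
    have h3 : HasDerivAt (fun y : ℝ => y * Real.exp (-b * y ^ 2))
        (1 * Real.exp (-b * x ^ 2) + x * (Real.exp (-b * x ^ 2) * (-b * (2 * x)))) x :=
      (hasDerivAt_id x).mul (h1.exp)
    convert h3 using 1; ring
  have hint : Integrable (fun x : ℝ =>
      Real.exp (-b * x ^ 2) - 2 * b * (x ^ 2 * Real.exp (-b * x ^ 2))) :=
    (integrable_exp_neg_mul_sq hb).sub ((aux_integrable_sq_mul_exp hb).const_mul _)
  have hzero := integral_eq_zero_of_hasDerivAt_of_integrable hderiv hint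
    (integrable_mul_exp_neg_mul_sq hb)
  rw [integral_sub (integrable_exp_neg_mul_sq hb)
    ((aux_integrable_sq_mul_exp hb).const_mul _), integral_const_mul,
    integral_gaussian] at hzero
  have h2b : (2 * b) ≠ 0 := by positivity
  field_simp at hzero ⊢
  linarith

lemma aux_gaussian_integral_eq {μ : ℝ} {v : ℝ≥0} (hv : v ≠ 0) (g : ℝ → ℝ) :
    ∫ x, g x ∂(gaussianReal μ v) = ∫ x, gaussianPDFReal μ v x * g x := by
  rw [gaussianReal_of_var_ne_zero μ hv]
  have h : (gaussianPDF μ v) = fun x => (((gaussianPDFReal μ v x).toNNReal : ℝ≥0) : ℝ≥0∞) := rfl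
  rw [h, integral_withDensity_eq_integral_smul (measurable_gaussianPDFReal μ v).real_toNNReal g]
  congr 1; funext x
  rw [NNReal.smul_def, Real.coe_toNNReal _ (gaussianPDFReal_nonneg μ v x), smul_eq_mul]

lemma aux_gaussian_sq_integrand (v : ℝ≥0) (hv : v ≠ 0) (g : ℝ → ℝ) :
    (fun x => gaussianPDFReal 0 v x * g x)
      = fun x => (Real.sqrt (2 * π * v))⁻¹ * (g x * Real.exp (-(2 * (v:ℝ))⁻¹ * x ^ 2)) := by
  funext x
  have hv' : (0:ℝ) < (v:ℝ) := by exact_mod_cast lt_of_le_of_ne (zero_le : 0 ≤ v) (Ne.symm hv)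
  rw [gaussianPDFReal]
  rw [show (-(x - 0) ^ 2 / (2 * (v:ℝ)) = -(2 * (v:ℝ))⁻¹ * x ^ 2) by field_simp; ring]
  ring

lemma aux_gaussian_sq (v : ℝ≥0) : ∫ x, x ^ 2 ∂(gaussianReal 0 v) = v := by
  by_cases hv : v = 0
  · simp [hv, gaussianReal_zero_var]
  have hv' : (0:ℝ) < (v:ℝ) := by exact_mod_cast lt_of_le_of_ne (zero_le : 0 ≤ v) (Ne.symm hv)
  have hb : (0:ℝ) < (2 * (v:ℝ))⁻¹ := by positivity
  rw [aux_gaussian_integral_eq hv, aux_gaussian_sq_integrand v hv, integral_const_mul,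
    aux_integral_sq_mul_exp hb]
  have h1 : (2 * ((2 * (v:ℝ))⁻¹))⁻¹ = (v:ℝ) := by field_simp
  have h2 : π / (2 * (v:ℝ))⁻¹ = 2 * π * v := by field_simp
  rw [h1, h2]
  have h3 : Real.sqrt (2 * π * v) ≠ 0 := by
    refine Real.sqrt_ne_zero'.2 ?_; positivity
  field_simp

lemma aux_gaussian_memLp (v : ℝ≥0) : MemLp id 2 (gaussianReal 0 v) := by
  by_cases hv : v = 0
  · rw [hv, gaussianReal_zero_var]
    have : (id : ℝ → ℝ) =ᵐ[Measure.dirac (0:ℝ)] fun _ => (0:ℝ) := by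
      rw [ae_dirac_eq]; exact Filter.eventually_pure.2 rfl
    exact (memLp_const 0).ae_eq this.symm
  have hv' : (0:ℝ) < (v:ℝ) := by exact_mod_cast lt_of_le_of_ne (zero_le : 0 ≤ v) (Ne.symm hv)
  have hb : (0:ℝ) < (2 * (v:ℝ))⁻¹ := by positivity
  refine (memLp_two_iff_integrable_sq aestronglyMeasurable_id).2 ?_
  rw [gaussianReal_of_var_ne_zero 0 hv]
  have h : (gaussianPDF 0 v) = fun x => (((gaussianPDFReal 0 v x).toNNReal : ℝ≥0) : ℝ≥0∞) := rfl
  rw [h, integrable_withDensity_iff_integrable_smul (measurable_gaussianPDFReal 0 v).real_toNNReal]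
  have : (fun x : ℝ => (gaussianPDFReal 0 v x).toNNReal • (id x ^ 2))
      = fun x => (Real.sqrt (2 * π * v))⁻¹ * (x ^ 2 * Real.exp (-(2 * (v:ℝ))⁻¹ * x ^ 2)) := by
    have := aux_gaussian_sq_integrand v hv (fun x => x ^ 2)
    funext x
    have hx := congrFun this x
    simp only [NNReal.smul_def, Real.coe_toNNReal _ (gaussianPDFReal_nonneg 0 v x), smul_eq_mul,
      id_eq]
    exact hx
  rw [this]
  exact (aux_integrable_sq_mul_exp hb).const_mul _

lemma aux_gaussian_mean (v : ℝ≥0) : ∫ x, x ∂(gaussianReal 0 v) = 0 := by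
  have hmap : (gaussianReal 0 v).map (fun x => (-1 : ℝ) * x) = gaussianReal 0 v := by
    rw [gaussianReal_map_const_mul (-1 : ℝ)]
    norm_num
  have hint : Integrable (fun x : ℝ => x) (gaussianReal 0 v) := by
    have := (aux_gaussian_memLp v).integrable one_le_two
    exact this
  have h1 : ∫ x, (fun y : ℝ => y) x ∂((gaussianReal 0 v).map (fun x => (-1:ℝ) * x))
      = ∫ x, -1 * x ∂(gaussianReal 0 v) :=
    integral_map (by fun_prop) aestronglyMeasurable_id
  rw [hmap, integral_const_mul] at h1
  simp only at h1
  linarith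

lemma aux_rv_memLp {Ω : Type*} [MeasurableSpace Ω] {P : Measure Ω} [IsProbabilityMeasure P]
    {V : Ω → ℝ} (hVm : Measurable V) {v : ℝ≥0}
    (hV : Measure.map V P = gaussianReal 0 v) : MemLp V 2 P := by
  have := (memLp_map_measure_iff (μ := P) (f := V) (g := (id : ℝ → ℝ)) (p := 2)
    aestronglyMeasurable_id hVm.aemeasurable)
  rw [hV] at this
  exact this.1 (aux_gaussian_memLp v)

lemma aux_rv_mean {Ω : Type*} [MeasurableSpace Ω] {P : Measure Ω} [IsProbabilityMeasure P]
    {V : Ω → ℝ} (hVm : Measurable V) {v : ℝ≥0}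
    (hV : Measure.map V P = gaussianReal 0 v) : ∫ ω, V ω ∂P = 0 := by
  have h : ∫ x, (fun y : ℝ => y) x ∂(Measure.map V P) = ∫ ω, V ω ∂P :=
    integral_map hVm.aemeasurable aestronglyMeasurable_id
  rw [hV] at h
  rw [← h, aux_gaussian_mean]

lemma aux_rv_sq {Ω : Type*} [MeasurableSpace Ω] {P : Measure Ω} [IsProbabilityMeasure P]
    {V : Ω → ℝ} (hVm : Measurable V) {v : ℝ≥0}
    (hV : Measure.map V P = gaussianReal 0 v) : ∫ ω, V ω ^ 2 ∂P = v := by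
  have h : ∫ x, (fun y : ℝ => y ^ 2) x ∂(Measure.map V P) = ∫ ω, V ω ^ 2 ∂P :=
    integral_map hVm.aemeasurable (by fun_prop)
  rw [hV] at h
  rw [← h, aux_gaussian_sq]

lemma aux_rv_variance {Ω : Type*} [MeasurableSpace Ω] {P : Measure Ω} [IsProbabilityMeasure P]
    {V : Ω → ℝ} (hVm : Measurable V) {v : ℝ≥0}
    (hV : Measure.map V P = gaussianReal 0 v) : variance V P = v := by
  rw [variance_eq_sub (aux_rv_memLp hVm hV)]
  have h1 : P[V ^ 2] = ∫ ω, V ω ^ 2 ∂P := by congr 1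
  rw [h1, aux_rv_sq hVm hV, aux_rv_mean hVm hV]
  simp

lemma aux_measurable_dot {n : ℕ} (a : Fin n → ℝ) :
    Measurable (fun x : Fin n → ℝ => a ⬝ᵥ x) := by
  unfold dotProduct
  exact Finset.measurable_sum _ fun i _ => (measurable_pi_apply i).const_mul _

lemma aux_measurable_mulVec {n k : ℕ} (M : Matrix (Fin k) (Fin n) ℝ) {Ω : Type*}
    [MeasurableSpace Ω] {g : Ω → Fin n → ℝ} (hg : Measurable g) :
    Measurable (fun ω => M.mulVec (g ω)) := by
  apply measurable_pi_lambda
  intro i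
  exact (aux_measurable_dot (M i)).comp hg

lemma aux_dot_sum {n : ℕ} {ι : Type*} (s : Finset ι) (v : Fin n → ℝ) (w : ι → Fin n → ℝ) :
    v ⬝ᵥ (∑ i ∈ s, w i) = ∑ i ∈ s, v ⬝ᵥ w i := by
  simp only [dotProduct, Finset.sum_apply, Finset.mul_sum]
  exact Finset.sum_comm

lemma aux_sum_dot {n : ℕ} {ι : Type*} (s : Finset ι) (v : Fin n → ℝ) (w : ι → Fin n → ℝ) :
    (∑ i ∈ s, w i) ⬝ᵥ v = ∑ i ∈ s, w i ⬝ᵥ v := by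
  simp only [dotProduct, Finset.sum_apply, Finset.sum_mul]
  exact Finset.sum_comm

lemma aux_telescope {d m : ℕ} (T τ : ℕ) (A : ℕ → ℕ → Matrix (Fin d) (Fin d) ℝ)
    (C : Matrix (Fin m) (Fin d) ℝ) (x b : ℕ → Fin d → ℝ) (u : ℕ → Fin m → ℝ)
    (y : ℕ → Fin d → ℝ)
    (hx : ∀ t < T, x (t + 1) =
      (∑ s ∈ Icc 1 (min τ (t + 1)), (A (t + 1) s).mulVec (x (t + 1 - s))) + b (t + 1))
    (hy : ∀ t < T, y t =
      (∑ s ∈ Icc 1 (min τ (T - t)), (A (t + s) s)ᵀ.mulVec (y (t + s))) + Cᵀ.mulVec (u t)) :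
    y T ⬝ᵥ x T + ∑ t ∈ range T, u t ⬝ᵥ C.mulVec (x t) =
      y 0 ⬝ᵥ x 0 + ∑ t ∈ range T, y (t + 1) ⬝ᵥ b (t + 1) := by
  have tele : ∑ t ∈ range T, (y (t+1) ⬝ᵥ x (t+1) - y t ⬝ᵥ x t) = y T ⬝ᵥ x T - y 0 ⬝ᵥ x 0 :=
    Finset.sum_range_sub (fun t => y t ⬝ᵥ x t) T
  have expand : ∀ t ∈ range T, y (t+1) ⬝ᵥ x (t+1) - y t ⬝ᵥ x t =
      ((∑ s ∈ Icc 1 (min τ (t+1)), y (t+1) ⬝ᵥ (A (t+1) s).mulVec (x (t+1-s)))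
        + y (t+1) ⬝ᵥ b (t+1))
      - ((∑ s ∈ Icc 1 (min τ (T-t)), y (t+s) ⬝ᵥ (A (t+s) s).mulVec (x t))
        + u t ⬝ᵥ C.mulVec (x t)) := by
    intro t ht
    rw [Finset.mem_range] at ht
    have h1 : y (t+1) ⬝ᵥ x (t+1) =
        (∑ s ∈ Icc 1 (min τ (t+1)), y (t+1) ⬝ᵥ (A (t+1) s).mulVec (x (t+1-s)))
          + y (t+1) ⬝ᵥ b (t+1) := by
      rw [hx t ht, dotProduct_add, aux_dot_sum]
    have h2 : y t ⬝ᵥ x t =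
        (∑ s ∈ Icc 1 (min τ (T-t)), y (t+s) ⬝ᵥ (A (t+s) s).mulVec (x t))
          + u t ⬝ᵥ C.mulVec (x t) := by
      conv_lhs => rw [hy t ht]
      rw [add_dotProduct, aux_sum_dot]
      congr 1
      · refine Finset.sum_congr rfl fun s _ => ?_
        rw [Matrix.mulVec_transpose, ← Matrix.dotProduct_mulVec]
      · rw [Matrix.mulVec_transpose, ← Matrix.dotProduct_mulVec]
    rw [h1, h2]
  rw [Finset.sum_congr rfl expand] at tele
  have hswap : ∑ t ∈ range T, ∑ s ∈ Icc 1 (min τ (t+1)),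
        y (t+1) ⬝ᵥ (A (t+1) s).mulVec (x (t+1-s))
      = ∑ t ∈ range T, ∑ s ∈ Icc 1 (min τ (T-t)), y (t+s) ⬝ᵥ (A (t+s) s).mulVec (x t) := by
    rw [Finset.sum_sigma', Finset.sum_sigma']
    refine Finset.sum_nbij' (fun p => ⟨p.1 + 1 - p.2, p.2⟩) (fun p => ⟨p.1 + p.2 - 1, p.2⟩)
      ?_ ?_ ?_ ?_ ?_
    · rintro ⟨t, s⟩ hp
      simp only [Finset.mem_sigma, Finset.mem_range, Finset.mem_Icc, le_min_iff,
        lt_min_iff] at hp ⊢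
      omega
    · rintro ⟨t, s⟩ hp
      simp only [Finset.mem_sigma, Finset.mem_range, Finset.mem_Icc, le_min_iff,
        lt_min_iff] at hp ⊢
      omega
    · rintro ⟨t, s⟩ hp
      simp only [Finset.mem_sigma, Finset.mem_range, Finset.mem_Icc, le_min_iff] at hp
      have : t + 1 - s + s - 1 = t := by omega
      simp [this]
    · rintro ⟨t, s⟩ hp
      simp only [Finset.mem_sigma, Finset.mem_range, Finset.mem_Icc, le_min_iff] at hp
      have : t + s - 1 + 1 - s = t := by omega
      simp [this]
    · rintro ⟨t, s⟩ hp
      simp only [Finset.mem_sigma, Finset.mem_range, Finset.mem_Icc, le_min_iff] at hp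
      have h : t + 1 - s + s = t + 1 := by omega
      rw [h]
  rw [Finset.sum_sub_distrib, Finset.sum_add_distrib, Finset.sum_add_distrib, hswap] at tele
  linarith

end AuxLemmas

section

variable (d m T : ℕ)

/-- Index type for the mutually independent noise sources: the initial condition
`X_0`, the process noises `B_1,…,B_T`, and the observation noises `W_1,…,W_{T+1}`. -/
abbrev NoiseIdx (T : ℕ) : Type := Unit ⊕ Fin T ⊕ Fin (T + 1)

/-- Codomain of each noise source. -/
abbrev NoiseSpace (d m : ℕ) : NoiseIdx T → Type
  | .inl _ => Fin d → ℝ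
  | .inr (.inl _) => Fin d → ℝ
  | .inr (.inr _) => Fin m → ℝ

noncomputable instance (i : NoiseIdx T) : MeasurableSpace (NoiseSpace T d m i) := by
  cases i with
  | inl _ => infer_instance
  | inr j => cases j with
    | inl _ => infer_instance
    | inr _ => infer_instance

/-- The family of noise sources as a single dependent family of random vectors. -/
def noiseFamily {Ω : Type*} (X0 : Ω → Fin d → ℝ) (B : ℕ → Ω → Fin d → ℝ)
    (W : ℕ → Ω → Fin m → ℝ) : (i : NoiseIdx T) → Ω → NoiseSpace T d m i
  | .inl _ => X0
  | .inr (.inl t) => B ((t : ℕ) + 1)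
  | .inr (.inr t) => W ((t : ℕ) + 1)

/-- duality principle for the non-Markovian linear Gaussian model.
For the Gaussian model with mutually independent Gaussian sources
`X_0 ~ N(μ0,Sig0)`, `B_t ~ N(0,Q)`, `W_t ~ N(0,R)` (Gaussianity expressed through
one-dimensional projections), any deterministic control `u` and backward dual
process `y` with `y_T = f` satisfy
`E[|fᵀX_T - S_T|²] = |y_0|²_{Sig0} + ∑_{t=1}^T |y_t|²_Q + ∑_{t=0}^{T-1} |u_t|²_R`. -/
theorem duality_linear_gaussian {Ω : Type*} [MeasurableSpace Ω]
    (P : Measure Ω) [IsProbabilityMeasure P] (τ : ℕ)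
    (A : ℕ → ℕ → Matrix (Fin d) (Fin d) ℝ) (C : Matrix (Fin m) (Fin d) ℝ)
    (Sig0 Q : Matrix (Fin d) (Fin d) ℝ) (R : Matrix (Fin m) (Fin m) ℝ)
    (hSig0 : Sig0.PosSemidef) (hQ : Q.PosSemidef) (hR : R.PosDef)
    (μ0 f : Fin d → ℝ)
    (X0 : Ω → Fin d → ℝ) (B : ℕ → Ω → Fin d → ℝ) (W : ℕ → Ω → Fin m → ℝ)
    (X : ℕ → Ω → Fin d → ℝ) (Z : ℕ → Ω → Fin m → ℝ)
    (hX0m : Measurable X0) (hBm : ∀ t, Measurable (B t)) (hWm : ∀ t, Measurable (W t))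
    -- mutual independence of (X_0, B, W)
    (hIndep : iIndepFun
      (noiseFamily d m T X0 B W) P)
    -- Gaussian laws, via one-dimensional projections
    (hX0g : ∀ a : Fin d → ℝ, Measure.map (fun ω => a ⬝ᵥ X0 ω) P =
      gaussianReal (a ⬝ᵥ μ0) (a ⬝ᵥ Sig0.mulVec a).toNNReal)
    (hBg : ∀ t, 1 ≤ t → t ≤ T → ∀ a : Fin d → ℝ,
      Measure.map (fun ω => a ⬝ᵥ B t ω) P = gaussianReal 0 (a ⬝ᵥ Q.mulVec a).toNNReal)
    (hWg : ∀ t, 1 ≤ t → t ≤ T + 1 → ∀ a : Fin m → ℝ,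
      Measure.map (fun ω => a ⬝ᵥ W t ω) P = gaussianReal 0 (a ⬝ᵥ R.mulVec a).toNNReal)
    -- state dynamics and observation model
    (hXinit : X 0 = X0)
    (hXdyn : ∀ t < T, ∀ ω, X (t + 1) ω =
      (∑ s ∈ Icc 1 (min τ (t + 1)), (A (t + 1) s).mulVec (X (t + 1 - s) ω)) + B (t + 1) ω)
    (hZdyn : ∀ t ≤ T, ∀ ω, Z (t + 1) ω = C.mulVec (X t ω) + W (t + 1) ω)
    -- deterministic control and backward dual process
    (u : ℕ → Fin m → ℝ) (y : ℕ → Fin d → ℝ)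
    (hyT : y T = f)
    (hy : ∀ t < T, y t =
      (∑ s ∈ Icc 1 (min τ (T - t)), (A (t + s) s)ᵀ.mulVec (y (t + s))) + Cᵀ.mulVec (u t)) :
    ∫ ω, (f ⬝ᵥ X T ω - (μ0 ⬝ᵥ y 0 - ∑ t ∈ range T, u t ⬝ᵥ Z (t + 1) ω)) ^ 2 ∂P =
      y 0 ⬝ᵥ Sig0.mulVec (y 0) + (∑ t ∈ range T, y (t + 1) ⬝ᵥ Q.mulVec (y (t + 1))) +
        ∑ t ∈ range T, u t ⬝ᵥ R.mulVec (u t) := by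

  classical
  -- measurability of the state process
  have hXm : ∀ t, t ≤ T → Measurable (X t) := by
    intro t
    induction t using Nat.strong_induction_on with
    | _ t ih =>
      intro ht
      match t with
      | 0 => rw [hXinit]; exact hX0m
      | (n+1) =>
        have hfun : X (n+1) = fun ω =>
            (∑ s ∈ Icc 1 (min τ (n+1)), (A (n+1) s).mulVec (X (n+1-s) ω)) + B (n+1) ω := by
          funext ω; exact hXdyn n (by omega) ω
        rw [hfun]
        refine Measurable.add ?_ (hBm (n+1))
        refine Finset.measurable_sum _ fun s hs => ?_
        have hs1 : 1 ≤ s := (Finset.mem_Icc.mp hs).1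
        exact aux_measurable_mulVec _ (ih (n+1-s) (by omega) (by omega))
  -- the scalar random variables
  set N := noiseFamily d m T X0 B W with hN
  let g : (i : NoiseIdx T) → NoiseSpace T d m i → ℝ := fun i =>
    match i with
    | .inl _ => fun x => y 0 ⬝ᵥ x + -(y 0 ⬝ᵥ μ0)
    | .inr (.inl t) => fun x => y ((t : ℕ) + 1) ⬝ᵥ x
    | .inr (.inr t) => fun x => (if ((t : ℕ)) < T then u (t : ℕ) else 0) ⬝ᵥ x
  have hgm : ∀ i, Measurable (g i) := by
    intro i
    match i with
    | .inl _ => exact (aux_measurable_dot _).add_const _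
    | .inr (.inl t) => exact aux_measurable_dot _
    | .inr (.inr t) => exact aux_measurable_dot _
  let V : NoiseIdx T → Ω → ℝ := fun i => g i ∘ N i
  have hVindep : iIndepFun V P := hIndep.comp g hgm
  have hNm : ∀ i, Measurable (N i) := by
    intro i
    match i with
    | .inl _ => exact hX0m
    | .inr (.inl t) => exact hBm _
    | .inr (.inr t) => exact hWm _
  have hVm : ∀ i, Measurable (V i) := fun i => (hgm i).comp (hNm i)
  -- variances
  let vr : NoiseIdx T → ℝ≥0 := fun i =>
    match i with
    | .inl _ => (y 0 ⬝ᵥ Sig0.mulVec (y 0)).toNNReal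
    | .inr (.inl t) => (y ((t : ℕ) + 1) ⬝ᵥ Q.mulVec (y ((t : ℕ) + 1))).toNNReal
    | .inr (.inr t) => ((if ((t : ℕ)) < T then u (t : ℕ) else 0) ⬝ᵥ
        R.mulVec (if ((t : ℕ)) < T then u (t : ℕ) else 0)).toNNReal
  have hlaw : ∀ i, Measure.map (V i) P = gaussianReal 0 (vr i) := by
    intro i
    match i with
    | .inl _ =>
      have h0 := hX0g (y 0)
      have hmm : Measure.map (V (.inl ())) P
          = (Measure.map (fun ω => y 0 ⬝ᵥ X0 ω) P).map (· + -(y 0 ⬝ᵥ μ0)) := by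
        rw [Measure.map_map (measurable_add_const _)
          (show Measurable fun ω => y 0 ⬝ᵥ X0 ω from (aux_measurable_dot (y 0)).comp hX0m)]
        rfl
      rw [hmm, h0, gaussianReal_map_add_const, add_neg_cancel]
    | .inr (.inl t) => exact hBg ((t : ℕ) + 1) (by omega) (by omega) (y ((t : ℕ) + 1))
    | .inr (.inr t) => exact hWg ((t : ℕ) + 1) (by omega) (by omega) _
  have hMem : ∀ i, MemLp (V i) 2 P := fun i => aux_rv_memLp (hVm i) (hlaw i)
  have hmean : ∀ i, ∫ ω, V i ω ∂P = 0 := fun i => aux_rv_mean (hVm i) (hlaw i)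
  have hvar : ∀ i, variance (V i) P = vr i := fun i => aux_rv_variance (hVm i) (hlaw i)
  -- pointwise identity
  have hpoint : ∀ ω, f ⬝ᵥ X T ω - (μ0 ⬝ᵥ y 0 - ∑ t ∈ range T, u t ⬝ᵥ Z (t + 1) ω)
      = ∑ i : NoiseIdx T, V i ω := by
    intro ω
    have hkey : y T ⬝ᵥ X T ω + ∑ t ∈ range T, u t ⬝ᵥ C.mulVec (X t ω)
        = y 0 ⬝ᵥ X 0 ω + ∑ t ∈ range T, y (t + 1) ⬝ᵥ B (t + 1) ω :=
      aux_telescope T τ A C (fun t => X t ω) (fun t => B t ω) u y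
        (fun t ht => hXdyn t ht ω) hy
    rw [hyT, hXinit] at hkey
    have hZ : ∑ t ∈ range T, u t ⬝ᵥ Z (t + 1) ω
        = (∑ t ∈ range T, u t ⬝ᵥ C.mulVec (X t ω)) + ∑ t ∈ range T, u t ⬝ᵥ W (t + 1) ω := by
      rw [← Finset.sum_add_distrib]
      refine Finset.sum_congr rfl fun t ht => ?_
      rw [Finset.mem_range] at ht
      rw [hZdyn t ht.le ω, dotProduct_add]
    have hB' : ∑ t : Fin T, V (.inr (.inl t)) ω = ∑ t ∈ range T, y (t + 1) ⬝ᵥ B (t + 1) ω :=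
      Fin.sum_univ_eq_sum_range (fun t => y (t + 1) ⬝ᵥ B (t + 1) ω) T
    have hW' : ∑ t : Fin (T + 1), V (.inr (.inr t)) ω
        = ∑ t ∈ range T, u t ⬝ᵥ W (t + 1) ω := by
      have h1 : ∑ t : Fin (T + 1), V (.inr (.inr t)) ω
          = ∑ t ∈ range (T + 1), (if t < T then u t else 0) ⬝ᵥ W (t + 1) ω :=
        Fin.sum_univ_eq_sum_range (fun t => (if t < T then u t else 0) ⬝ᵥ W (t + 1) ω) (T + 1)
      rw [h1, Finset.sum_range_succ, if_neg (lt_irrefl T), zero_dotProduct, add_zero]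
      refine Finset.sum_congr rfl fun t ht => ?_
      rw [Finset.mem_range] at ht
      rw [if_pos ht]
    have hsplit : ∑ i : NoiseIdx T, V i ω
        = V (.inl ()) ω + ((∑ t : Fin T, V (.inr (.inl t)) ω)
          + ∑ t : Fin (T + 1), V (.inr (.inr t)) ω) := by
      rw [Fintype.sum_sum_type]
      congr 1
      · exact Fintype.sum_unique _
      · rw [Fintype.sum_sum_type]
    rw [hsplit, hB', hW', hZ]
    have hVl : V (.inl ()) ω = y 0 ⬝ᵥ X0 ω + -(y 0 ⬝ᵥ μ0) := rfl
    rw [hVl, dotProduct_comm μ0 (y 0)]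
    linarith [hkey]
  -- the sum of the variables
  have hMemS : MemLp (∑ i : NoiseIdx T, V i) 2 P :=
    memLp_finset_sum' _ (fun i _ => hMem i)
  have hInt : ∀ i, Integrable (V i) P := fun i => (hMem i).integrable one_le_two
  have hES : ∫ ω, (∑ i : NoiseIdx T, V i) ω ∂P = 0 := by
    have : ∫ ω, (∑ i : NoiseIdx T, V i) ω ∂P = ∑ i : NoiseIdx T, ∫ ω, V i ω ∂P := by
      simp only [Finset.sum_apply]
      exact integral_finset_sum _ (fun i _ => hInt i)
    rw [this]
    exact Finset.sum_eq_zero fun i _ => hmean i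
  have hpair : Set.Pairwise ↑(Finset.univ : Finset (NoiseIdx T))
      (fun i j => IndepFun (V i) (V j) P) := fun i _ j _ hij => hVindep.indepFun hij
  have hvarS : variance (∑ i : NoiseIdx T, V i) P = ∑ i : NoiseIdx T, variance (V i) P :=
    IndepFun.variance_sum (fun i _ => hMem i) hpair
  have hdef := variance_eq_sub hMemS
  have hsq : ∫ ω, (f ⬝ᵥ X T ω - (μ0 ⬝ᵥ y 0 - ∑ t ∈ range T, u t ⬝ᵥ Z (t + 1) ω)) ^ 2 ∂P
      = ∑ i : NoiseIdx T, (vr i : ℝ) := by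
    have h1 : ∫ ω, (f ⬝ᵥ X T ω - (μ0 ⬝ᵥ y 0 - ∑ t ∈ range T, u t ⬝ᵥ Z (t + 1) ω)) ^ 2 ∂P
        = P[(∑ i : NoiseIdx T, V i) ^ 2] := by
      refine integral_congr_ae (Filter.Eventually.of_forall fun ω => ?_)
      show (f ⬝ᵥ X T ω - (μ0 ⬝ᵥ y 0 - ∑ t ∈ range T, u t ⬝ᵥ Z (t + 1) ω)) ^ 2
          = ((∑ i : NoiseIdx T, V i) ^ 2) ω
      rw [hpoint ω]
      simp [Finset.sum_apply]
    rw [h1]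
    have h2 : P[(∑ i : NoiseIdx T, V i) ^ 2]
        = variance (∑ i : NoiseIdx T, V i) P + (P[∑ i : NoiseIdx T, V i]) ^ 2 := by
      rw [hdef]; ring
    rw [h2, hES, hvarS]
    simp only [ne_eq, OfNat.ofNat_ne_zero, not_false_eq_true, zero_pow, add_zero]
    exact Finset.sum_congr rfl fun i _ => hvar i
  rw [hsq]
  -- compute the sum of variances
  have hS0 : ((((y 0 ⬝ᵥ Sig0.mulVec (y 0)).toNNReal) : ℝ≥0) : ℝ) = y 0 ⬝ᵥ Sig0.mulVec (y 0) := by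
    refine Real.coe_toNNReal _ ?_
    have := hSig0.dotProduct_mulVec_nonneg (y 0)
    simpa using this
  have hQ' : ∀ t : ℕ, (((y (t + 1) ⬝ᵥ Q.mulVec (y (t + 1))).toNNReal : ℝ≥0) : ℝ)
      = y (t + 1) ⬝ᵥ Q.mulVec (y (t + 1)) := by
    intro t
    refine Real.coe_toNNReal _ ?_
    have := hQ.dotProduct_mulVec_nonneg (y (t + 1))
    simpa using this
  have hR' : ∀ t : ℕ, (((u t ⬝ᵥ R.mulVec (u t)).toNNReal : ℝ≥0) : ℝ) = u t ⬝ᵥ R.mulVec (u t) := by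
    intro t
    refine Real.coe_toNNReal _ ?_
    have := hR.posSemidef.dotProduct_mulVec_nonneg (u t)
    simpa using this
  have hsum : ∑ i : NoiseIdx T, (vr i : ℝ)
      = (vr (.inl ()) : ℝ) + ((∑ t : Fin T, (vr (.inr (.inl t)) : ℝ))
        + ∑ t : Fin (T + 1), (vr (.inr (.inr t)) : ℝ)) := by
    rw [Fintype.sum_sum_type]
    congr 1
    · exact Fintype.sum_unique _
    · rw [Fintype.sum_sum_type]
  rw [hsum]
  have e1 : (vr (.inl ()) : ℝ) = y 0 ⬝ᵥ Sig0.mulVec (y 0) := hS0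
  have e2 : ∑ t : Fin T, (vr (.inr (.inl t)) : ℝ)
      = ∑ t ∈ range T, y (t + 1) ⬝ᵥ Q.mulVec (y (t + 1)) := by
    rw [Fin.sum_univ_eq_sum_range (fun t => ((y (t + 1) ⬝ᵥ Q.mulVec (y (t + 1))).toNNReal : ℝ)) T]
    exact Finset.sum_congr rfl fun t _ => hQ' t
  have e3 : ∑ t : Fin (T + 1), (vr (.inr (.inr t)) : ℝ)
      = ∑ t ∈ range T, u t ⬝ᵥ R.mulVec (u t) := by
    rw [Fin.sum_univ_eq_sum_range
      (fun t => (((if t < T then u t else 0) ⬝ᵥ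
        R.mulVec (if t < T then u t else 0)).toNNReal : ℝ)) (T + 1)]
    rw [Finset.sum_range_succ, if_neg (lt_irrefl T), zero_dotProduct]
    simp only [Real.toNNReal_zero, NNReal.coe_zero, add_zero]
    refine Finset.sum_congr rfl fun t ht => ?_
    rw [Finset.mem_range] at ht
    rw [if_pos ht]
    exact hR' t
  rw [e1, e2, e3]
  ring

end
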